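/- For p₁ ∈ (0,1) and σ > 0, define for x > 0 the function r(x) = (1/2)·[ 1 − p₁·erf( x/(2√2·σ) + (σ/(√2·x))·log(p₁/(1−p₁)) ) − (1−p₁)·erf( x/(2√2·σ) − (σ/(√2·x))·log(p₁/(1−p₁)) ) ]. Then for all x > 0 the derivative satisfies r'(x) = −√( p₁(1−p₁)/(2π σ²) )·exp( −x²/(8σ²) − (σ²/(2x²))·log²(p₁/(1−p₁)) ); in particular r is strictly decreasing on (0, ∞). -/

import Mathlib

noncomputable section

/-- The Gauss error function `erf(t) = (2/√π) ∫₀ᵗ e^{−s²} ds`. -/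
def erf (t : ℝ) : ℝ := (2 / Real.sqrt Real.pi) * ∫ s in (0:ℝ)..t, Real.exp (-s ^ 2)

/-- The function `r_{p₁,σ}` of Eq. (B.31): the optimal target risk of linear threshold
classifiers in a balanced two-class Gaussian location model with class-mean separation `x`. -/
def rFun (p₁ σ x : ℝ) : ℝ :=
  (1 / 2) *
    (1 - p₁ * erf (x / (2 * Real.sqrt 2 * σ) +
          (σ / (Real.sqrt 2 * x)) * Real.log (p₁ / (1 - p₁)))
       - (1 - p₁) * erf (x / (2 * Real.sqrt 2 * σ) -
          (σ / (Real.sqrt 2 * x)) * Real.log (p₁ / (1 - p₁))))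

lemma erf_hasDerivAt (t : ℝ) :
    HasDerivAt erf ((2 / Real.sqrt Real.pi) * Real.exp (-t ^ 2)) t := by
  have h : HasDerivAt (fun u => ∫ s in (0:ℝ)..u, Real.exp (-s ^ 2)) (Real.exp (-t^2)) t := by
    apply intervalIntegral.integral_hasDerivAt_right
    · exact (Continuous.intervalIntegrable (by continuity) _ _)
    · exact (Continuous.stronglyMeasurableAtFilter (by continuity) _ _)
    · exact (Continuous.continuousAt (by continuity))
  exact h.const_mul (2 / Real.sqrt Real.pi)

lemma sq_expand (s x σ L : ℝ) (hs : s^2 = 2) (hx : x ≠ 0) (hσ : σ ≠ 0) (hs0 : s ≠ 0) :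
    (x/(2*s*σ) + σ/(s*x)*L)^2 = x^2/(8*σ^2) + L/2 + σ^2/(2*x^2)*L^2 := by
  have h : (x/(2*s*σ) + σ/(s*x)*L)^2 = (x^2/(4*σ^2) + L + σ^2/x^2*L^2) / s^2 := by
    field_simp
    ring
  rw [h, hs]
  ring

lemma sq_expand' (s x σ L : ℝ) (hs : s^2 = 2) (hx : x ≠ 0) (hσ : σ ≠ 0) (hs0 : s ≠ 0) :
    (x/(2*s*σ) - σ/(s*x)*L)^2 = x^2/(8*σ^2) - L/2 + σ^2/(2*x^2)*L^2 := by
  have h := sq_expand s x σ (-L) hs hx hσ hs0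
  linear_combination h

lemma inv_deriv (σ L x : ℝ) (hx : x ≠ 0) :
    HasDerivAt (fun x : ℝ => (σ / (Real.sqrt 2 * x)) * L)
      (-(σ * L / (Real.sqrt 2 * x ^ 2))) x := by
  have hinv : HasDerivAt (fun x : ℝ => x⁻¹) (-(x^2)⁻¹) x := hasDerivAt_inv hx
  have h := hinv.const_mul (σ * L / Real.sqrt 2)
  have heq : (fun x : ℝ => (σ / (Real.sqrt 2 * x)) * L) = fun y => σ * L / Real.sqrt 2 * y⁻¹ := by
    funext y; rw [div_eq_mul_inv, div_eq_mul_inv, mul_inv]; ring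
  rw [heq]
  refine h.congr_deriv ?_
  have h2 : Real.sqrt 2 ≠ 0 := by positivity
  ring

lemma mul_sqrt_div (a b : ℝ) (ha : 0 < a) (_hb : 0 < b) :
    a * Real.sqrt (b / a) = Real.sqrt (a * b) := by
  calc a * Real.sqrt (b / a) = Real.sqrt (a^2) * Real.sqrt (b / a) := by
        rw [Real.sqrt_sq ha.le]
    _ = Real.sqrt (a^2 * (b / a)) := (Real.sqrt_mul (sq_nonneg a) _).symm
    _ = Real.sqrt (a * b) := by congr 1; field_simp

/-- The derivative formula for `r_{p₁,σ}` and its strict monotonicity on `(0,∞)`. -/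
theorem statement19 (p₁ σ : ℝ) (hp : p₁ ∈ Set.Ioo (0:ℝ) 1) (hσ : 0 < σ) :
    (∀ x : ℝ, 0 < x →
      HasDerivAt (rFun p₁ σ)
        (-Real.sqrt (p₁ * (1 - p₁) / (2 * Real.pi * σ ^ 2)) *
          Real.exp (-(x ^ 2 / (8 * σ ^ 2)) -
            (σ ^ 2 / (2 * x ^ 2)) * (Real.log (p₁ / (1 - p₁))) ^ 2)) x) ∧
    StrictAntiOn (rFun p₁ σ) (Set.Ioi 0) := by
  obtain ⟨hp0, hp1⟩ := hp
  have hq0 : (0:ℝ) < 1 - p₁ := by linarith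
  set L := Real.log (p₁ / (1 - p₁)) with hL
  have hs0 : (0:ℝ) < Real.sqrt 2 := by positivity
  have hπ0 : (0:ℝ) < Real.sqrt Real.pi := Real.sqrt_pos.mpr Real.pi_pos
  have hs2 : (Real.sqrt 2)^2 = 2 := Real.sq_sqrt (by norm_num)
  have key : ∀ x : ℝ, 0 < x →
      HasDerivAt (rFun p₁ σ)
        (-Real.sqrt (p₁ * (1 - p₁) / (2 * Real.pi * σ ^ 2)) *
          Real.exp (-(x ^ 2 / (8 * σ ^ 2)) - (σ ^ 2 / (2 * x ^ 2)) * L ^ 2)) x := by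
    intro x hx
    have hx0 : x ≠ 0 := ne_of_gt hx
    set A : ℝ := x / (2 * Real.sqrt 2 * σ) + (σ / (Real.sqrt 2 * x)) * L with hA
    set B : ℝ := x / (2 * Real.sqrt 2 * σ) - (σ / (Real.sqrt 2 * x)) * L with hB
    have h1 : HasDerivAt (fun x : ℝ => x / (2 * Real.sqrt 2 * σ)) (1 / (2 * Real.sqrt 2 * σ)) x :=
      (hasDerivAt_id x).div_const _
    have h2 := inv_deriv σ L x hx0
    have hAd : HasDerivAt (fun x : ℝ => x / (2 * Real.sqrt 2 * σ) + (σ / (Real.sqrt 2 * x)) * L)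
        (1 / (2 * Real.sqrt 2 * σ) + -(σ * L / (Real.sqrt 2 * x ^ 2))) x := h1.add h2
    have hBd : HasDerivAt (fun x : ℝ => x / (2 * Real.sqrt 2 * σ) - (σ / (Real.sqrt 2 * x)) * L)
        (1 / (2 * Real.sqrt 2 * σ) - -(σ * L / (Real.sqrt 2 * x ^ 2))) x := h1.sub h2
    have herfA : HasDerivAt
        (fun x : ℝ => erf (x / (2 * Real.sqrt 2 * σ) + (σ / (Real.sqrt 2 * x)) * L))
        ((2 / Real.sqrt Real.pi) * Real.exp (-A ^ 2) *
          (1 / (2 * Real.sqrt 2 * σ) + -(σ * L / (Real.sqrt 2 * x ^ 2)))) x :=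
      (erf_hasDerivAt A).comp (h := fun x : ℝ => x / (2 * Real.sqrt 2 * σ) + (σ / (Real.sqrt 2 * x)) * L) x hAd
    have herfB : HasDerivAt
        (fun x : ℝ => erf (x / (2 * Real.sqrt 2 * σ) - (σ / (Real.sqrt 2 * x)) * L))
        ((2 / Real.sqrt Real.pi) * Real.exp (-B ^ 2) *
          (1 / (2 * Real.sqrt 2 * σ) - -(σ * L / (Real.sqrt 2 * x ^ 2)))) x :=
      (erf_hasDerivAt B).comp (h := fun x : ℝ => x / (2 * Real.sqrt 2 * σ) - (σ / (Real.sqrt 2 * x)) * L) x hBd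
    have hraw := (((herfA.const_mul p₁).const_sub 1).sub
        (herfB.const_mul (1 - p₁))).const_mul (1/2 : ℝ)
    have hfun : rFun p₁ σ = fun y : ℝ => (1/2 : ℝ) *
        (1 - p₁ * erf (y / (2 * Real.sqrt 2 * σ) + (σ / (Real.sqrt 2 * y)) * L)
           - (1 - p₁) * erf (y / (2 * Real.sqrt 2 * σ) - (σ / (Real.sqrt 2 * y)) * L)) := rfl
    rw [hfun]
    refine hraw.congr_deriv ?_
    symm
    -- value equality
    set E : ℝ := Real.exp (-(x ^ 2 / (8 * σ ^ 2)) - σ ^ 2 / (2 * x ^ 2) * L ^ 2) with hE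
    have hA2 : A ^ 2 = x^2/(8*σ^2) + L/2 + σ^2/(2*x^2)*L^2 := by
      rw [hA]; exact sq_expand _ x σ L hs2 hx0 (ne_of_gt hσ) (ne_of_gt hs0)
    have hB2 : B ^ 2 = x^2/(8*σ^2) - L/2 + σ^2/(2*x^2)*L^2 := by
      rw [hB]; exact sq_expand' _ x σ L hs2 hx0 (ne_of_gt hσ) (ne_of_gt hs0)
    have hexpA : Real.exp (-A ^ 2) = E * Real.exp (-L/2) := by
      rw [hA2, hE, ← Real.exp_add]; congr 1; ring
    have hexpB : Real.exp (-B ^ 2) = E * Real.exp (L/2) := by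
      rw [hB2, hE, ← Real.exp_add]; congr 1; ring
    have hexpmL : Real.exp (-L/2) = Real.sqrt ((1 - p₁)/p₁) := by
      have h : -L/2 = Real.log ((1 - p₁)/p₁) / 2 := by
        rw [hL, ← Real.log_inv, inv_div]
      rw [h, Real.exp_half, Real.exp_log (by positivity)]
    have hexppL : Real.exp (L/2) = Real.sqrt (p₁/(1 - p₁)) := by
      rw [hL, Real.exp_half, Real.exp_log (by positivity)]
    have hQa : p₁ * Real.sqrt ((1 - p₁)/p₁) = Real.sqrt (p₁ * (1 - p₁)) :=
      mul_sqrt_div p₁ (1 - p₁) hp0 hq0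
    have hQb : (1 - p₁) * Real.sqrt (p₁/(1 - p₁)) = Real.sqrt (p₁ * (1 - p₁)) := by
      rw [mul_comm p₁ (1 - p₁)]; exact mul_sqrt_div (1 - p₁) p₁ hq0 hp0
    have hT : Real.sqrt (p₁ * (1 - p₁) / (2 * Real.pi * σ ^ 2))
        = Real.sqrt (p₁ * (1 - p₁)) / (Real.sqrt 2 * Real.sqrt Real.pi * σ) := by
      rw [Real.sqrt_div (by positivity : (0:ℝ) ≤ p₁ * (1 - p₁)),
        show (2 : ℝ) * Real.pi * σ ^ 2 = 2 * (Real.pi * σ ^ 2) by ring,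
        Real.sqrt_mul (by norm_num : (0:ℝ) ≤ 2),
        Real.sqrt_mul Real.pi_pos.le, Real.sqrt_sq hσ.le, mul_assoc]
    rw [hexpA, hexpB, hexpmL, hexppL, hT]
    set Qa := Real.sqrt ((1 - p₁)/p₁)
    set Qb := Real.sqrt (p₁/(1 - p₁))
    linear_combination
      ((2 / Real.sqrt Real.pi) * E * (1 / (2 * Real.sqrt 2 * σ) + -(σ * L / (Real.sqrt 2 * x ^ 2))) / 2) * hQa
      + ((2 / Real.sqrt Real.pi) * E * (1 / (2 * Real.sqrt 2 * σ) - -(σ * L / (Real.sqrt 2 * x ^ 2))) / 2) * hQb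
  refine ⟨key, ?_⟩
  have cont : ContinuousOn (rFun p₁ σ) (Set.Ioi 0) := fun x hx =>
    ((key x hx).continuousAt).continuousWithinAt
  apply strictAntiOn_of_deriv_neg (convex_Ioi 0) cont
  intro x hx
  rw [interior_Ioi] at hx
  rw [(key x hx).deriv]
  have hS : 0 < Real.sqrt (p₁ * (1 - p₁) / (2 * Real.pi * σ ^ 2)) :=
    Real.sqrt_pos.mpr (by positivity)
  have := mul_pos hS (Real.exp_pos (-(x ^ 2 / (8 * σ ^ 2)) - σ ^ 2 / (2 * x ^ 2) * L ^ 2))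
  nlinarith [this]

end
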